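/- Every tree with at least two facets has at least two distinct leaves. -/
import Mathlib


open Finset

variable {α : Type*} [DecidableEq α]

/-- A set of vertices meeting every facet. -/
def IsVertexCover (Δ : Finset (Finset α)) (A : Finset α) : Prop :=
  ∀ F ∈ Δ, (A ∩ F).Nonempty

/-- A vertex cover none of whose proper subsets is a cover. -/
def IsMinimalVertexCover (Δ : Finset (Finset α)) (A : Finset α) : Prop :=
  IsVertexCover Δ A ∧ ∀ B ⊆ A, IsVertexCover Δ B → B = A

/-- The vertex covering number α(Δ). -/
noncomputable def coverNum (Δ : Finset (Finset α)) : ℕ :=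
  sInf {n | ∃ A : Finset α, IsVertexCover Δ A ∧ A.card = n}

/-- All minimal vertex covers have the same cardinality. -/
def Unmixed (Δ : Finset (Finset α)) : Prop :=
  ∀ A B : Finset α, IsMinimalVertexCover Δ A → IsMinimalVertexCover Δ B →
    A.card = B.card

/-- `F` is a leaf of `Δ`: it is the only facet, or some facet `G ≠ F`
satisfies `F ∩ F' ⊆ F ∩ G` for every facet `F' ≠ F`. -/
def IsLeaf (Δ : Finset (Finset α)) (F : Finset α) : Prop :=
  F ∈ Δ ∧ (Δ = {F} ∨ ∃ G ∈ Δ, G ≠ F ∧ ∀ F' ∈ Δ, F' ≠ F → F ∩ F' ⊆ F ∩ G)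

/-- `G` is a joint of the leaf `F` in `Δ`. -/
def IsJoint (Δ : Finset (Finset α)) (G F : Finset α) : Prop :=
  F ∈ Δ ∧ G ∈ Δ ∧ G ≠ F ∧ (∀ F' ∈ Δ, F' ≠ F → F ∩ F' ⊆ F ∩ G) ∧
    (F ∩ G).Nonempty

def HasLeaf (Δ : Finset (Finset α)) : Prop := ∃ F, IsLeaf Δ F

/-- Every nonempty subcollection has a leaf. -/
def IsForest (Δ : Finset (Finset α)) : Prop :=
  ∀ Γ ⊆ Δ, Γ.Nonempty → HasLeaf Γ

/-- Any two facets are linked by a chain of facets with consecutive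
nonempty intersections. -/
def ComplexConnected (Δ : Finset (Finset α)) : Prop :=
  ∀ F ∈ Δ, ∀ G ∈ Δ,
    Relation.ReflTransGen (fun A B => A ∈ Δ ∧ B ∈ Δ ∧ (A ∩ B).Nonempty) F G

def IsTree (Δ : Finset (Finset α)) : Prop := ComplexConnected Δ ∧ IsForest Δ

/-- An independent (pairwise disjoint) set of facets of `Δ`. -/
def IndependentFacets (Δ S : Finset (Finset α)) : Prop :=
  S ⊆ Δ ∧ ∀ F ∈ S, ∀ G ∈ S, F ≠ G → F ∩ G = ∅

/-- The independence number β(Δ). -/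
noncomputable def indepNum (Δ : Finset (Finset α)) : ℕ :=
  sSup {n | ∃ S : Finset (Finset α), IndependentFacets Δ S ∧ S.card = n}

/-- An independent set of facets not properly contained in another. -/
def MaximalIndependent (Δ S : Finset (Finset α)) : Prop :=
  IndependentFacets Δ S ∧ ∀ T, IndependentFacets Δ T → S ⊆ T → T = S

/-- `v` is a free vertex of the facet `F`: it belongs to no other facet. -/
def FreeVertex (Δ : Finset (Finset α)) (v : α) (F : Finset α) : Prop :=
  F ∈ Δ ∧ v ∈ F ∧ ∀ G ∈ Δ, v ∈ G → G = F

/-- The facets form an antichain (they are the maximal faces). -/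
def FacetAntichain (Δ : Finset (Finset α)) : Prop :=
  ∀ F ∈ Δ, ∀ G ∈ Δ, F ⊆ G → F = G

/-- Every tree with at least two facets has at least two distinct leaves. -/
theorem tree_two_leaves (Δ : Finset (Finset α))
    (htree : IsTree Δ) (hcard : 2 ≤ Δ.card) :
    ∃ F G : Finset α, F ≠ G ∧ IsLeaf Δ F ∧ IsLeaf Δ G := by
  induction Δ using Finset.strongInduction with
  | _ Δ ih =>
  obtain ⟨hconn, hforest⟩ := htree
  have hne : Δ.Nonempty := Finset.card_pos.mp (by omega)
  obtain ⟨F, hFΔ, hFcase⟩ := hforest Δ (Finset.Subset.refl _) hne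
  rcases hFcase with h1 | ⟨G, hGΔ, hGF, hleaf⟩
  · exfalso; rw [h1] at hcard; simp at hcard
  set Δ' := Δ.erase F with hΔ'
  have hsub : Δ' ⊆ Δ := Finset.erase_subset _ _
  have hGΔ' : G ∈ Δ' := Finset.mem_erase.mpr ⟨hGF, hGΔ⟩
  have hcard' : Δ'.card = Δ.card - 1 := Finset.card_erase_of_mem hFΔ
  -- connectivity of Δ'
  have key : ∀ {A B : Finset α},
      Relation.ReflTransGen (fun A B => A ∈ Δ ∧ B ∈ Δ ∧ (A ∩ B).Nonempty) A B →
      Relation.ReflTransGen (fun A B => A ∈ Δ' ∧ B ∈ Δ' ∧ (A ∩ B).Nonempty)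
        (if A = F then G else A) (if B = F then G else B) := by
    intro A B h
    induction h with
    | refl => exact Relation.ReflTransGen.refl
    | tail _ hstep ihp =>
      refine ihp.trans ?_
      obtain ⟨hb, hc, hbc⟩ := hstep
      rename_i b c _
      by_cases hbF : b = F
      · by_cases hcF : c = F
        · simp only [hbF, hcF, if_pos]
          exact Relation.ReflTransGen.refl
        · simp only [hbF, hcF, if_pos, if_neg, if_true, if_false]
          refine Relation.ReflTransGen.single ⟨hGΔ', Finset.mem_erase.mpr ⟨hcF, hc⟩, ?_⟩
          obtain ⟨x, hx⟩ := hbc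
          rw [hbF] at hx
          have hxG : x ∈ F ∩ G := hleaf c hc hcF (Finset.mem_inter.mpr
            ⟨(Finset.mem_inter.mp hx).1, (Finset.mem_inter.mp hx).2⟩)
          exact ⟨x, Finset.mem_inter.mpr ⟨(Finset.mem_inter.mp hxG).2,
            (Finset.mem_inter.mp hx).2⟩⟩
      · by_cases hcF : c = F
        · simp only [hbF, hcF, if_neg, if_pos, if_true, if_false]
          refine Relation.ReflTransGen.single ⟨Finset.mem_erase.mpr ⟨hbF, hb⟩, hGΔ', ?_⟩
          obtain ⟨x, hx⟩ := hbc
          rw [hcF] at hx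
          have hxG : x ∈ F ∩ G := hleaf b hb hbF (Finset.mem_inter.mpr
            ⟨(Finset.mem_inter.mp hx).2, (Finset.mem_inter.mp hx).1⟩)
          exact ⟨x, Finset.mem_inter.mpr ⟨(Finset.mem_inter.mp hx).1,
            (Finset.mem_inter.mp hxG).2⟩⟩
        · simp only [hbF, hcF, if_neg]
          exact Relation.ReflTransGen.single
            ⟨Finset.mem_erase.mpr ⟨hbF, hb⟩, Finset.mem_erase.mpr ⟨hcF, hc⟩, hbc⟩
  have hconn' : ComplexConnected Δ' := by
    intro A hA B hB
    have h := key (hconn A (hsub hA) B (hsub hB))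
    rwa [if_neg (Finset.mem_erase.mp hA).1, if_neg (Finset.mem_erase.mp hB).1] at h
  have hforest' : IsForest Δ' := fun Γ hΓ hΓne => hforest Γ (hΓ.trans hsub) hΓne
  by_cases hc1 : Δ'.card = 1
  · -- Δ = {F, G}
    have hsing : Δ' = {G} := Finset.eq_singleton_iff_unique_mem.mpr
      ⟨hGΔ', fun x hx => by
        have := Finset.card_eq_one.mp hc1
        obtain ⟨a, ha⟩ := this
        rw [ha] at hx hGΔ'
        simp at hx hGΔ'; rw [hx, hGΔ']⟩
    refine ⟨F, G, fun h => hGF h.symm, ⟨hFΔ, Or.inr ⟨G, hGΔ, hGF, hleaf⟩⟩,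
      ⟨hGΔ, Or.inr ⟨F, hFΔ, fun h => hGF h.symm, ?_⟩⟩⟩
    intro F' hF' hF'G
    have hFF : F' = F := by
      by_contra hF'F
      have hm : F' ∈ Δ' := Finset.mem_erase.mpr ⟨hF'F, hF'⟩
      rw [hsing, Finset.mem_singleton] at hm
      exact hF'G hm
    rw [hFF]
  · have hc2 : 2 ≤ Δ'.card := by
      have : Δ'.Nonempty := ⟨G, hGΔ'⟩
      have := Finset.card_pos.mpr this
      omega
    have hss : Δ' ⊂ Δ := Finset.erase_ssubset hFΔ
    obtain ⟨H₁, H₂, hH12, hL1, hL2⟩ := ih Δ' hss ⟨hconn', hforest'⟩ hc2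
    -- pick H ≠ G
    have pick : ∃ H, H ≠ G ∧ IsLeaf Δ' H := by
      by_cases h : H₁ = G
      · exact ⟨H₂, fun he => hH12 (h.trans he.symm), hL2⟩
      · exact ⟨H₁, h, hL1⟩
    obtain ⟨H, hHG, hHΔ', hHcase⟩ := pick
    have hHF : H ≠ F := (Finset.mem_erase.mp hHΔ').1
    rcases hHcase with h1 | ⟨W, hWΔ', hWH, hWleaf⟩
    · exfalso; rw [h1] at hc1; simp at hc1
    refine ⟨F, H, fun h => hHF h.symm, ⟨hFΔ, Or.inr ⟨G, hGΔ, hGF, hleaf⟩⟩,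
      ⟨hsub hHΔ', Or.inr ⟨W, hsub hWΔ', hWH, ?_⟩⟩⟩
    intro F' hF' hF'H
    by_cases hF'F : F' = F
    · intro x hx
      rw [hF'F] at hx
      have hx' := Finset.mem_inter.mp hx
      have hxG : x ∈ F ∩ G := hleaf H (hsub hHΔ') hHF
        (Finset.mem_inter.mpr ⟨hx'.2, hx'.1⟩)
      have hxHG : x ∈ H ∩ G := Finset.mem_inter.mpr
        ⟨hx'.1, (Finset.mem_inter.mp hxG).2⟩
      exact hWleaf G hGΔ' (fun h => hHG h.symm) hxHG
    · exact hWleaf F' (Finset.mem_erase.mpr ⟨hF'F, hF'⟩) hF'H
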